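/- For any sandwich measure-theoretically subordinate subshift X, the marginals ν_0 and ν_1 of any base measure ρ are ergodic and do not depend on the choice of the base measure ρ. Moreover, ν_1(1) = sup{μ(1) : μ ∈ 𝓜(X)} and ν_0(0) = sup{μ(0) : μ ∈ 𝓜(X)}, and ν_1 and ν_0 are the unique members of 𝓜(X) realizing these respective suprema. -/

import Mathlib

open MeasureTheory Filter Topology

/-- The full shift space `{0,1}^ℤ`, with `Bool` playing the role of `{0,1}`
(`false` ↔ `0`, `true` ↔ `1`). -/
abbrev BinSeq : Type := ℤ → Bool

/-- The left shift `σ`. -/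
def shift : BinSeq → BinSeq := fun x n => x (n + 1)

/-- The product shift `σ × σ`. -/
def shift2 : BinSeq × BinSeq → BinSeq × BinSeq := Prod.map shift shift

/-- The product shift `σ × σ × σ` on triples `((w,x),y)`. -/
def shift3 : (BinSeq × BinSeq) × BinSeq → (BinSeq × BinSeq) × BinSeq := Prod.map shift2 shift

/-- Coordinatewise multiplication `M(x,y)` of two 0-1 sequences. -/
def Mmul : BinSeq × BinSeq → BinSeq := fun p n => p.1 n && p.2 n

/-- The map `N((w,x),y) = (1-y)·w + y·x` (coordinatewise: `x` where `y = 1`, `w` where `y = 0`). -/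
def Nmap : (BinSeq × BinSeq) × BinSeq → BinSeq := fun t n => bif t.2 n then t.1.2 n else t.1.1 n

/-- The coordinatewise partial order `y ≤ x` on `{0,1}^ℤ`. -/
def leSeq (y x : BinSeq) : Prop := ∀ n, y n ≤ x n

/-- A subshift: a closed, shift-invariant subset of `{0,1}^ℤ`. -/
def IsSubshift (X : Set BinSeq) : Prop := IsClosed X ∧ shift ⁻¹' X = X

/-- The set of `T`-invariant Borel probability measures. -/
def InvProb {α : Type*} [MeasurableSpace α] (T : α → α) : Set (Measure α) :=
  {μ | IsProbabilityMeasure μ ∧ Measure.map T μ = μ}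

/-- `𝓜(X)`: shift-invariant Borel probability measures concentrated on `X`. -/
def MeasOn (X : Set BinSeq) : Set (Measure BinSeq) :=
  {μ | μ ∈ InvProb shift ∧ μ X = 1}

/-- `𝓜(Z)` for `Z ⊆ {0,1}^ℤ × {0,1}^ℤ`. -/
def MeasOn2 (Z : Set (BinSeq × BinSeq)) : Set (Measure (BinSeq × BinSeq)) :=
  {ρ | ρ ∈ InvProb shift2 ∧ ρ Z = 1}

/-- `X` is a measure-theoretically subordinate subshift with base measure `ν`:
`𝓜(X) = {M_*(ρ) : ρ ∈ 𝓜({0,1}^ℤ × {0,1}^ℤ, σ×σ), (π₁)_*(ρ) = ν}`. -/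
def Subord (X : Set BinSeq) (ν : Measure BinSeq) : Prop :=
  MeasOn X = {μ | ∃ ρ ∈ InvProb shift2,
    Measure.map Prod.fst ρ = ν ∧ Measure.map Mmul ρ = μ}

/-- `X` is a sandwich measure-theoretically subordinate subshift with pre-base measure `ρ`:
`𝓜(X) = {N_*(κ) : κ ∈ 𝓜(({0,1}^ℤ)³), (π₁,₂)_*(κ) = ρ}`. -/
def SandwichSubord (X : Set BinSeq) (ρ : Measure (BinSeq × BinSeq)) : Prop :=
  MeasOn X = {μ | ∃ κ ∈ InvProb shift3,
    Measure.map Prod.fst κ = ρ ∧ Measure.map Nmap κ = μ}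

/-- `ρ({(w,x) : w ≤ x coordinatewise}) = 1`: a pre-base measure satisfying this is a base
measure. -/
def AboveDiag (ρ : Measure (BinSeq × BinSeq)) : Prop :=
  ρ {p : BinSeq × BinSeq | ∀ n, p.1 n ≤ p.2 n} = 1

/-- The cylinder `{x : x₀ = b}`. -/
def cylB (b : Bool) : Set BinSeq := {x : BinSeq | x 0 = b}

/-- The set `[w,x] = {σ^k y : w ≤ y ≤ x, k ∈ ℤ}`. -/
def sandwichSet (w x : BinSeq) : Set BinSeq :=
  {z | ∃ (k : ℤ) (y : BinSeq), (∀ n, w n ≤ y n) ∧ (∀ n, y n ≤ x n) ∧ z = fun n => y (n + k)}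

/-- Topological entropy (base-2) of a subshift: exponential growth rate of the number of
`n`-blocks appearing in `X`. -/
noncomputable def htop (X : Set BinSeq) : ℝ :=
  Filter.limsup (fun n : ℕ =>
    Real.logb 2
      ((Set.ncard {A : Fin n → Bool | ∃ x ∈ X, ∀ i : Fin n, x ((i : ℕ) : ℤ) = A i} : ℝ))
      / (n : ℝ)) Filter.atTop

/-- Kolmogorov–Sinai entropy (base-2) of a shift-invariant measure on `{0,1}^ℤ`,
computed via the generating partition into cylinders. -/
noncomputable def entropy (μ : Measure BinSeq) : ℝ :=
  Filter.limsup (fun n : ℕ =>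
    (∑ A : Fin n → Bool,
      Real.negMulLog ((μ {x : BinSeq | ∀ i : Fin n, x ((i : ℕ) : ℤ) = A i}).toReal))
      / ((n : ℝ) * Real.log 2)) Filter.atTop

/-- Kolmogorov–Sinai entropy (base-2) of a `σ×σ`-invariant measure on
`{0,1}^ℤ × {0,1}^ℤ`. -/
noncomputable def entropy2 (ρ : Measure (BinSeq × BinSeq)) : ℝ :=
  Filter.limsup (fun n : ℕ =>
    (∑ A : Fin n → Bool, ∑ B : Fin n → Bool,
      Real.negMulLog ((ρ {p : BinSeq × BinSeq |
        (∀ i : Fin n, p.1 ((i : ℕ) : ℤ) = A i) ∧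
        (∀ i : Fin n, p.2 ((i : ℕ) : ℤ) = B i)}).toReal))
      / ((n : ℝ) * Real.log 2)) Filter.atTop

open scoped Classical in
/-- Topological pressure (base-2) of a subshift `X` with potential `φ`:
`𝒫_{X,φ} = lim (1/n) log₂ Σ_{A ∈ ℒ_n(X)} 2^{sup_{x ∈ [A] ∩ X} φ⁽ⁿ⁾(x)}`. -/
noncomputable def pressure (X : Set BinSeq) (φ : BinSeq → ℝ) : ℝ :=
  Filter.limsup (fun n : ℕ =>
    Real.logb 2 (∑ A : Fin n → Bool,
      if ∃ x ∈ X, ∀ i : Fin n, x ((i : ℕ) : ℤ) = A i then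
        (2 : ℝ) ^ sSup {r : ℝ | ∃ x ∈ X, (∀ i : Fin n, x ((i : ℕ) : ℤ) = A i) ∧
          r = ∑ k ∈ Finset.range n, φ (shift^[k] x)}
      else 0) / (n : ℝ)) Filter.atTop

/-- Birkhoff average of a continuous function along the first `N` points of the `T`-orbit. -/
noncomputable def birkAvg {α : Type*} [TopologicalSpace α] (T : α → α) (x : α) (N : ℕ)
    (f : C(α, ℝ)) : ℝ :=
  (∑ n ∈ Finset.range N, f (T^[n] x)) / (N : ℝ)

/-- `x` is quasi-generic for `μ` along `(N i)`: the empirical measures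
`(1/N_i) Σ_{n<N_i} δ_{T^n x}` converge weakly-* to `μ`. -/
def QuasiGenericAlong {α : Type*} [TopologicalSpace α] [MeasurableSpace α]
    (T : α → α) (x : α) (N : ℕ → ℕ) (μ : Measure α) : Prop :=
  ∀ f : C(α, ℝ), Filter.Tendsto (fun i => birkAvg T x (N i) f) Filter.atTop
    (nhds (∫ y, f y ∂μ))

/-- `x` is generic for `μ`. -/
def GenericFor {α : Type*} [TopologicalSpace α] [MeasurableSpace α]
    (T : α → α) (x : α) (μ : Measure α) : Prop :=
  QuasiGenericAlong T x (fun i => i) μ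

/-- Weak-* convergence of a sequence of measures. -/
def WeakTendsto {α : Type*} [TopologicalSpace α] [MeasurableSpace α]
    (μs : ℕ → Measure α) (μ : Measure α) : Prop :=
  ∀ f : C(α, ℝ), Filter.Tendsto (fun K => ∫ y, f y ∂(μs K)) Filter.atTop
    (nhds (∫ y, f y ∂μ))

/-- `V(y)`: the invariant measures for which `y` is quasi-generic (along some
increasing sequence). -/
def Vset (y : BinSeq) : Set (Measure BinSeq) :=
  {μ | μ ∈ InvProb shift ∧ ∃ N : ℕ → ℕ, StrictMono N ∧ QuasiGenericAlong shift y N μ}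

/-- `V_{(N_i)}(y)`: the invariant measures for which `y` is quasi-generic along a
subsequence of `(N_i)`. -/
def VsetAlong (N : ℕ → ℕ) (y : BinSeq) : Set (Measure BinSeq) :=
  {μ | μ ∈ InvProb shift ∧ ∃ φ : ℕ → ℕ, StrictMono φ ∧ QuasiGenericAlong shift y (N ∘ φ) μ}

/-- `β` is the Bernoulli product measure on `{0,1}^ℤ` with `β({x : x₀ = 0}) = p`. -/
def IsBernoulli (p : ENNReal) (β : Measure BinSeq) : Prop :=
  IsProbabilityMeasure β ∧ ∀ (s : Finset ℤ) (A : ℤ → Bool),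
    β {x : BinSeq | ∀ i ∈ s, x i = A i} = ∏ i ∈ s, (if A i = false then p else 1 - p)

section Stmt8Aux

open MeasureTheory

private lemma mshift : Measurable shift :=
  measurable_pi_lambda _ fun n => measurable_pi_apply (n + 1)

private lemma mshift2 : Measurable shift2 := mshift.prodMap mshift

private lemma mshift3 : Measurable shift3 := mshift2.prodMap mshift

private lemma mNmap : Measurable Nmap := by
  refine measurable_pi_lambda _ fun n => ?_
  have h1 : Measurable fun t : (BinSeq × BinSeq) × BinSeq => t.1.1 n :=
    (measurable_pi_apply n).comp measurable_fst.fst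
  have h2 : Measurable fun t : (BinSeq × BinSeq) × BinSeq => t.1.2 n :=
    (measurable_pi_apply n).comp measurable_fst.snd
  have h3 : MeasurableSet {t : (BinSeq × BinSeq) × BinSeq | t.2 n = true} := by
    have h : Measurable fun t : (BinSeq × BinSeq) × BinSeq => t.2 n :=
      (measurable_pi_apply n).comp measurable_snd
    exact h (measurableSet_singleton true)
  simp only [Nmap, Bool.cond_eq_ite]
  exact Measurable.ite h3 h2 h1

/-- The selection map: `snd` if `b = true`, `fst` if `b = false`. -/
private def selm (b : Bool) : BinSeq × BinSeq → BinSeq := fun p n => bif b then p.2 n else p.1 n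

private lemma mselm (b : Bool) : Measurable (selm b) := by
  cases b
  · exact measurable_fst
  · exact measurable_snd

private lemma hle_point (b : Bool) (t : (BinSeq × BinSeq) × BinSeq)
    (hd : ∀ n, t.1.1 n ≤ t.1.2 n) (n : ℤ) (h : Nmap t n = b) : selm b t.1 n = b := by
  have hdn := hd n
  cases b <;> cases hy : t.2 n <;> cases hw : t.1.1 n <;> cases hx : t.1.2 n <;>
    simp_all [Nmap, selm] <;> exact absurd hdn (by decide)

private lemma mcylB (b : Bool) : MeasurableSet (cylB b) := by
  have h : Measurable fun x : BinSeq => x 0 := measurable_pi_apply 0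
  exact h (measurableSet_singleton b)

private def Dset : Set (BinSeq × BinSeq) := {p | ∀ n, p.1 n ≤ p.2 n}

private lemma mDset : MeasurableSet Dset := by
  have h : Dset = ⋂ n : ℤ,
      (fun p : BinSeq × BinSeq => (p.1 n, p.2 n)) ⁻¹' {q : Bool × Bool | q.1 ≤ q.2} := by
    ext p; simp [Dset]
  rw [h]
  exact MeasurableSet.iInter fun n =>
    (((measurable_pi_apply n).comp measurable_fst).prodMk
      ((measurable_pi_apply n).comp measurable_snd)) ((Set.to_countable _).measurableSet)

private lemma selm_mem (X : Set BinSeq) (ρ : Measure (BinSeq × BinSeq))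
    (hρ : ρ ∈ InvProb shift2) (hsub : SandwichSubord X ρ) (b : Bool) :
    Measure.map (selm b) ρ ∈ MeasOn X := by
  have hsub' : MeasOn X = _ := hsub
  rw [hsub']
  haveI : IsProbabilityMeasure ρ := hρ.1
  set g : BinSeq × BinSeq → (BinSeq × BinSeq) × BinSeq := fun p => (p, fun _ => b) with hg
  have mg : Measurable g := measurable_id.prodMk measurable_const
  refine ⟨Measure.map g ρ, ⟨Measure.isProbabilityMeasure_map mg.aemeasurable, ?_⟩, ?_, ?_⟩
  · rw [Measure.map_map mshift3 mg]
    have h : shift3 ∘ g = g ∘ shift2 := rfl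
    rw [h, ← Measure.map_map mg mshift2, hρ.2]
  · rw [Measure.map_map measurable_fst mg]
    exact Measure.map_id
  · rw [Measure.map_map mNmap mg]
    rfl

private lemma kappaD (X : Set BinSeq) (ρ : Measure (BinSeq × BinSeq)) (hdiag : AboveDiag ρ)
    (κ : Measure ((BinSeq × BinSeq) × BinSeq)) [IsProbabilityMeasure κ]
    (hfst : Measure.map Prod.fst κ = ρ) : κ (Prod.fst ⁻¹' Dset)ᶜ = 0 := by
  rw [prob_compl_eq_zero_iff (measurable_fst mDset)]
  have h1 : Measure.map Prod.fst κ Dset = 1 := by rw [hfst]; exact hdiag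
  rwa [Measure.map_apply measurable_fst mDset] at h1

private lemma selm_max (X : Set BinSeq) (ρ : Measure (BinSeq × BinSeq))
    (hρ : ρ ∈ InvProb shift2) (hsub : SandwichSubord X ρ) (b : Bool) (hdiag : AboveDiag ρ)
    (μ : Measure BinSeq) (hμ : μ ∈ MeasOn X) :
    μ (cylB b) ≤ Measure.map (selm b) ρ (cylB b) := by
  have hsub' : MeasOn X = _ := hsub
  rw [hsub'] at hμ
  obtain ⟨κ, hκ, hfst, hN⟩ := hμ
  haveI : IsProbabilityMeasure κ := hκ.1
  have hD3 : κ (Prod.fst ⁻¹' Dset)ᶜ = 0 := kappaD X ρ hdiag κ hfst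
  rw [← hN, Measure.map_apply mNmap (mcylB b), ← measure_inter_conull hD3,
      Measure.map_apply (mselm b) (mcylB b), ← hfst,
      Measure.map_apply measurable_fst ((mselm b) (mcylB b))]
  refine measure_mono ?_
  rintro t ⟨ht1, ht2⟩
  exact hle_point b t ht2 0 ht1

private lemma selm_unique (X : Set BinSeq) (ρ : Measure (BinSeq × BinSeq))
    (hρ : ρ ∈ InvProb shift2) (hsub : SandwichSubord X ρ) (b : Bool) (hdiag : AboveDiag ρ)
    (μ : Measure BinSeq) (hμ : μ ∈ MeasOn X)
    (heq : μ (cylB b) = Measure.map (selm b) ρ (cylB b)) :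
    μ = Measure.map (selm b) ρ := by
  have hsub' : MeasOn X = _ := hsub
  rw [hsub'] at hμ
  obtain ⟨κ, hκ, hfst, hN⟩ := hμ
  haveI : IsProbabilityMeasure κ := hκ.1
  set D3 : Set ((BinSeq × BinSeq) × BinSeq) := Prod.fst ⁻¹' Dset with hD3def
  have hD3 : κ D3ᶜ = 0 := kappaD X ρ hdiag κ hfst
  set A : Set ((BinSeq × BinSeq) × BinSeq) := (fun t => selm b t.1) ⁻¹' cylB b with hA
  set B : Set ((BinSeq × BinSeq) × BinSeq) := Nmap ⁻¹' cylB b with hB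
  have mA : MeasurableSet A := ((mselm b).comp measurable_fst) (mcylB b)
  have mB : MeasurableSet B := mNmap (mcylB b)
  have mD3 : MeasurableSet D3 := measurable_fst mDset
  have hκA : κ A = κ B := by
    have h1 : κ B = μ (cylB b) := by rw [← hN, Measure.map_apply mNmap (mcylB b)]
    have h2 : κ A = Measure.map (selm b) ρ (cylB b) := by
      rw [Measure.map_apply (mselm b) (mcylB b), ← hfst,
        Measure.map_apply measurable_fst ((mselm b) (mcylB b))]
      rfl
    rw [h1, h2, heq]
  have hBD_sub : B ∩ D3 ⊆ A ∩ D3 := by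
    rintro t ⟨h1, h2⟩
    exact ⟨hle_point b t h2 0 h1, h2⟩
  have hdiff : κ ((A ∩ D3) \ (B ∩ D3)) = 0 := by
    rw [measure_diff hBD_sub (mB.inter mD3).nullMeasurableSet (measure_ne_top κ _)]
    rw [measure_inter_conull hD3, measure_inter_conull hD3, hκA, tsub_self]
  have hG0 : κ {t : (BinSeq × BinSeq) × BinSeq | Nmap t 0 ≠ selm b t.1 0} = 0 := by
    have hss : {t : (BinSeq × BinSeq) × BinSeq | Nmap t 0 ≠ selm b t.1 0} ∩ D3
        ⊆ (A ∩ D3) \ (B ∩ D3) := by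
      rintro t ⟨hne, hd⟩
      have hNb : Nmap t 0 ≠ b := fun h => hne (by rw [h, hle_point b t hd 0 h])
      have hsel : selm b t.1 0 = b := by
        cases hN0 : Nmap t 0 <;> cases hs0 : selm b t.1 0 <;> cases b <;> simp_all
      exact ⟨⟨hsel, hd⟩, fun hBt => hNb hBt.1⟩
    calc κ {t : (BinSeq × BinSeq) × BinSeq | Nmap t 0 ≠ selm b t.1 0}
        = κ ({t : (BinSeq × BinSeq) × BinSeq | Nmap t 0 ≠ selm b t.1 0} ∩ D3) :=
          (measure_inter_conull hD3).symm
      _ = 0 := measure_mono_null hss hdiff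
  have mG : ∀ n : ℤ, MeasurableSet {t : (BinSeq × BinSeq) × BinSeq | Nmap t n ≠ selm b t.1 n} := by
    intro n
    exact (((measurable_pi_apply n).comp mNmap).prodMk
      ((measurable_pi_apply n).comp ((mselm b).comp measurable_fst)))
      ((Set.to_countable {q : Bool × Bool | q.1 ≠ q.2}).measurableSet)
  have hstep : ∀ n : ℤ,
      κ {t : (BinSeq × BinSeq) × BinSeq | Nmap t n ≠ selm b t.1 n}
        = κ {t : (BinSeq × BinSeq) × BinSeq | Nmap t (n + 1) ≠ selm b t.1 (n + 1)} := by
    intro n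
    conv_lhs => rw [← hκ.2]
    rw [Measure.map_apply mshift3 (mG n)]
    rfl
  have hGn : ∀ n : ℤ, κ {t : (BinSeq × BinSeq) × BinSeq | Nmap t n ≠ selm b t.1 n} = 0 := by
    intro n
    induction n using Int.induction_on with
    | zero => exact hG0
    | succ i ih => rw [← hstep i]; exact ih
    | pred i ih =>
        have h := hstep (-(i : ℤ) - 1)
        have e : (-(i : ℤ) - 1) + 1 = -(i : ℤ) := by ring
        rw [e] at h
        rw [h]; exact ih
  have hae : Nmap =ᵐ[κ] fun t => selm b t.1 := by
    rw [Filter.EventuallyEq, ae_iff]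
    refine measure_mono_null ?_
      (measure_iUnion_null (s := fun n : ℤ =>
        {t : (BinSeq × BinSeq) × BinSeq | Nmap t n ≠ selm b t.1 n}) hGn)
    intro t ht
    simp only [Set.mem_setOf_eq] at ht
    rw [funext_iff] at ht
    push_neg at ht
    obtain ⟨n, hn⟩ := ht
    exact Set.mem_iUnion.2 ⟨n, hn⟩
  calc μ = Measure.map Nmap κ := hN.symm
    _ = Measure.map (fun t => selm b t.1) κ := Measure.map_congr hae
    _ = Measure.map (selm b) (Measure.map Prod.fst κ) :=
        (Measure.map_map (mselm b) measurable_fst).symm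
    _ = Measure.map (selm b) ρ := by rw [hfst]

end Stmt8Aux


section Stmt8Aux2

open MeasureTheory

private lemma restrict_mem (X : Set BinSeq) (hX : IsSubshift X) (ν : Measure BinSeq)
    (hν : ν ∈ MeasOn X) (s : Set BinSeq) (hs : MeasurableSet s)
    (hinv : shift ⁻¹' s = s) (h0 : ν s ≠ 0) :
    (ν s)⁻¹ • ν.restrict s ∈ MeasOn X := by
  haveI : IsProbabilityMeasure ν := hν.1.1
  have hXm : MeasurableSet X := hX.1.measurableSet
  have hfin : ν s ≠ ⊤ := measure_ne_top ν s
  refine ⟨⟨⟨?_⟩, ?_⟩, ?_⟩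
  · rw [Measure.smul_apply, Measure.restrict_apply MeasurableSet.univ, Set.univ_inter,
      smul_eq_mul, ENNReal.inv_mul_cancel h0 hfin]
  · rw [Measure.map_smul]
    congr 1
    refine Measure.ext fun A hA => ?_
    rw [Measure.map_apply mshift hA, Measure.restrict_apply hA,
      Measure.restrict_apply (mshift hA)]
    have h : shift ⁻¹' A ∩ s = shift ⁻¹' (A ∩ s) := by rw [Set.preimage_inter, hinv]
    rw [h, ← Measure.map_apply mshift (hA.inter hs), hν.1.2]
  · have hXc : ν Xᶜ = 0 := (prob_compl_eq_zero_iff hXm).mpr hν.2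
    rw [Measure.smul_apply, Measure.restrict_apply' hs, Set.inter_comm,
      measure_inter_conull hXc, smul_eq_mul, ENNReal.inv_mul_cancel h0 hfin]

private lemma selm_ergodic (X : Set BinSeq) (ρ : Measure (BinSeq × BinSeq))
    (hX : IsSubshift X) (hρ : ρ ∈ InvProb shift2) (hsub : SandwichSubord X ρ)
    (hdiag : AboveDiag ρ) (b : Bool) :
    Ergodic shift (Measure.map (selm b) ρ) := by
  set ν := Measure.map (selm b) ρ with hνdef
  have hmem : ν ∈ MeasOn X := selm_mem X ρ hρ hsub b
  haveI : IsProbabilityMeasure ν := hmem.1.1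
  refine ⟨⟨mshift, hmem.1.2⟩, ⟨fun s hs hinv => ?_⟩⟩
  rw [Filter.eventuallyConst_set']
  by_contra hcon
  push_neg at hcon
  have h0 : ν s ≠ 0 := fun h => hcon.1 (ae_eq_empty.mpr h)
  have h1 : ν sᶜ ≠ 0 := fun h => hcon.2 (ae_eq_univ.mpr h)
  have hinv' : shift ⁻¹' sᶜ = sᶜ := by rw [Set.preimage_compl, hinv]
  set c := ν s with hc
  set c' := ν sᶜ with hc'
  have hcc' : c + c' = 1 := by rw [hc, hc', measure_add_measure_compl hs, measure_univ]
  set μ₁ := c⁻¹ • ν.restrict s with hμ₁def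
  have hμ₁ : μ₁ ∈ MeasOn X := restrict_mem X hX ν hmem s hs hinv h0
  have hμ₂ : c'⁻¹ • ν.restrict sᶜ ∈ MeasOn X := restrict_mem X hX ν hmem sᶜ hs.compl hinv' h1
  have hcfin : c ≠ ⊤ := measure_ne_top ν s
  have hc'fin : c' ≠ ⊤ := measure_ne_top ν sᶜ
  set m := ν (cylB b) with hm
  have hmfin : m ≠ ⊤ := measure_ne_top ν _
  have h1' : μ₁ (cylB b) ≤ m := selm_max X ρ hρ hsub b hdiag μ₁ hμ₁
  have h2' : (c'⁻¹ • ν.restrict sᶜ) (cylB b) ≤ m := selm_max X ρ hρ hsub b hdiag _ hμ₂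
  have e1 : μ₁ (cylB b) = c⁻¹ * ν (cylB b ∩ s) := by
    rw [hμ₁def, Measure.smul_apply, Measure.restrict_apply (mcylB b), smul_eq_mul]
  have e2 : (c'⁻¹ • ν.restrict sᶜ) (cylB b) = c'⁻¹ * ν (cylB b ∩ sᶜ) := by
    rw [Measure.smul_apply, Measure.restrict_apply (mcylB b), smul_eq_mul]
  have hle1 : ν (cylB b ∩ s) ≤ c * m := by
    have h := mul_le_mul_right h1' c
    rwa [e1, ← mul_assoc, ENNReal.mul_inv_cancel h0 hcfin, one_mul] at h
  have hle2 : ν (cylB b ∩ sᶜ) ≤ c' * m := by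
    have h := mul_le_mul_right h2' c'
    rwa [e2, ← mul_assoc, ENNReal.mul_inv_cancel h1 hc'fin, one_mul] at h
  have hsum : ν (cylB b ∩ s) + ν (cylB b ∩ sᶜ) = m := by
    have h := measure_inter_add_diff (μ := ν) (cylB b) hs
    rwa [Set.diff_eq] at h
  have hsum2 : c * m + c' * m = m := by rw [← add_mul, hcc', one_mul]
  have heq1 : ν (cylB b ∩ s) = c * m := by
    refine le_antisymm hle1 ?_
    have h : c * m + c' * m ≤ ν (cylB b ∩ s) + c' * m :=
      calc c * m + c' * m = m := hsum2
        _ = ν (cylB b ∩ s) + ν (cylB b ∩ sᶜ) := hsum.symm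
        _ ≤ ν (cylB b ∩ s) + c' * m := add_le_add_right hle2 _
    exact (ENNReal.add_le_add_iff_right (ENNReal.mul_ne_top hc'fin hmfin)).mp h
  have hμ₁cyl : μ₁ (cylB b) = m := by
    rw [e1, heq1, ← mul_assoc, ENNReal.inv_mul_cancel h0 hcfin, one_mul]
  have hμ₁eq : μ₁ = ν := selm_unique X ρ hρ hsub b hdiag μ₁ hμ₁ hμ₁cyl
  have hcontra : μ₁ sᶜ = ν sᶜ := by rw [hμ₁eq]
  rw [hμ₁def, Measure.smul_apply, Measure.restrict_apply hs.compl, Set.compl_inter_self,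
    measure_empty, smul_eq_mul, mul_zero] at hcontra
  exact h1 hcontra.symm

private lemma selm_indep (X : Set BinSeq) (ρ : Measure (BinSeq × BinSeq))
    (hρ : ρ ∈ InvProb shift2) (hsub : SandwichSubord X ρ) (hdiag : AboveDiag ρ)
    (ρ' : Measure (BinSeq × BinSeq)) (hρ' : ρ' ∈ InvProb shift2)
    (hsub' : SandwichSubord X ρ') (hdiag' : AboveDiag ρ') (b : Bool) :
    Measure.map (selm b) ρ' = Measure.map (selm b) ρ := by
  have hmem' := selm_mem X ρ' hρ' hsub' b
  have hmem := selm_mem X ρ hρ hsub b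
  have hle := selm_max X ρ hρ hsub b hdiag _ hmem'
  have hge := selm_max X ρ' hρ' hsub' b hdiag' _ hmem
  exact selm_unique X ρ hρ hsub b hdiag _ hmem' (le_antisymm hle hge)

end Stmt8Aux2


/-- For a sandwich measure-theoretically subordinate subshift `X`, the marginals
`ν₀, ν₁` of any base measure `ρ` are ergodic and independent of the choice of `ρ`; moreover
`ν₁` (resp. `ν₀`) is the unique member of `𝓜(X)` maximizing `μ(1)` (resp. `μ(0)`). -/
theorem stmt8 (X : Set BinSeq) (ρ : Measure (BinSeq × BinSeq))
    (hX : IsSubshift X) (hρ : ρ ∈ InvProb shift2)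
    (hsub : SandwichSubord X ρ) (hdiag : AboveDiag ρ) :
    Ergodic shift (Measure.map Prod.fst ρ) ∧
    Ergodic shift (Measure.map Prod.snd ρ) ∧
    (∀ ρ' ∈ InvProb shift2, SandwichSubord X ρ' → AboveDiag ρ' →
      Measure.map Prod.fst ρ' = Measure.map Prod.fst ρ ∧
      Measure.map Prod.snd ρ' = Measure.map Prod.snd ρ) ∧
    (Measure.map Prod.snd ρ ∈ MeasOn X ∧
      (∀ μ ∈ MeasOn X, μ (cylB true) ≤ (Measure.map Prod.snd ρ) (cylB true)) ∧
      (∀ μ ∈ MeasOn X, μ (cylB true) = (Measure.map Prod.snd ρ) (cylB true) →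
        μ = Measure.map Prod.snd ρ)) ∧
    (Measure.map Prod.fst ρ ∈ MeasOn X ∧
      (∀ μ ∈ MeasOn X, μ (cylB false) ≤ (Measure.map Prod.fst ρ) (cylB false)) ∧
      (∀ μ ∈ MeasOn X, μ (cylB false) = (Measure.map Prod.fst ρ) (cylB false) →
        μ = Measure.map Prod.fst ρ)) := by
  have e1 : Measure.map Prod.snd ρ = Measure.map (selm true) ρ := rfl
  have e0 : Measure.map Prod.fst ρ = Measure.map (selm false) ρ := rfl
  refine ⟨?_, ?_, ?_, ⟨?_, ?_, ?_⟩, ⟨?_, ?_, ?_⟩⟩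
  · rw [e0]; exact selm_ergodic X ρ hX hρ hsub hdiag false
  · rw [e1]; exact selm_ergodic X ρ hX hρ hsub hdiag true
  · intro ρ' hρ' hsub' hdiag'
    exact ⟨selm_indep X ρ hρ hsub hdiag ρ' hρ' hsub' hdiag' false,
           selm_indep X ρ hρ hsub hdiag ρ' hρ' hsub' hdiag' true⟩
  · exact selm_mem X ρ hρ hsub true
  · intro μ hμ; exact selm_max X ρ hρ hsub true hdiag μ hμ
  · intro μ hμ h; exact selm_unique X ρ hρ hsub true hdiag μ hμ h
  · exact selm_mem X ρ hρ hsub false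
  · intro μ hμ; exact selm_max X ρ hρ hsub false hdiag μ hμ
  · intro μ hμ h; exact selm_unique X ρ hρ hsub false hdiag μ hμ h
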